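/- Let x : [0,∞) → ℝ be continuous, b ∈ ℝ, 0 < α₁ < α₂, and let h^{α,b}(y) = α·1_{(b,∞)}(y). Suppose y¹ and y² are solutions of y^i_t = x_t − ∫_0^t h^{α_i, b}(y^i_s) ds for i = 1, 2 (with α₁ for y¹ and α₂ for y²). Then y¹_t ≥ y²_t for all t ≥ 0. -/

import Mathlib

open MeasureTheory Filter Topology Set

/-- comparison principle for refracted paths driven by a continuous
path `x`: if `y¹` solves the refraction equation with rate `α₁` and `y²` with rate
`α₂`, where `0 < α₁ < α₂` and `h^{α,b}(y) = α·1_{(b,∞)}(y)`, then `y¹ ≥ y²`. -/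
theorem stmt16 (x : ℝ → ℝ) (hx : Continuous x) (b : ℝ)
    (α₁ α₂ : ℝ) (h0 : 0 < α₁) (h12 : α₁ < α₂)
    (h : ℝ → ℝ → ℝ)
    (hh : ∀ α y : ℝ, h α y = α * Set.indicator (Set.Ioi b) (fun _ => (1:ℝ)) y)
    (y1 y2 : ℝ → ℝ)
    (hy1int : ∀ t : ℝ, 0 ≤ t →
      MeasureTheory.IntegrableOn (fun s => h α₁ (y1 s)) (Set.Ioc 0 t))
    (hy2int : ∀ t : ℝ, 0 ≤ t →
      MeasureTheory.IntegrableOn (fun s => h α₂ (y2 s)) (Set.Ioc 0 t))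
    (hy1 : ∀ t : ℝ, 0 ≤ t → y1 t = x t - ∫ s in Set.Ioc (0:ℝ) t, h α₁ (y1 s))
    (hy2 : ∀ t : ℝ, 0 ≤ t → y2 t = x t - ∫ s in Set.Ioc (0:ℝ) t, h α₂ (y2 s)) :
    ∀ t : ℝ, 0 ≤ t → y2 t ≤ y1 t := by
  intro t₀ ht₀
  by_contra hcon
  push_neg at hcon
  set F1 : ℝ → ℝ := fun t => ∫ s in Set.Ioc (0:ℝ) t, h α₁ (y1 s) with hF1
  set F2 : ℝ → ℝ := fun t => ∫ s in Set.Ioc (0:ℝ) t, h α₂ (y2 s) with hF2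
  set D : ℝ → ℝ := fun t => F1 t - F2 t with hD
  -- D t = y2 t - y1 t for t ≥ 0
  have hDy : ∀ t : ℝ, 0 ≤ t → D t = y2 t - y1 t := by
    intro t ht
    have h1 := hy1 t ht
    have h2 := hy2 t ht
    simp only [hD]
    rw [h1, h2]
    ring
  have hDt0 : 0 < D t₀ := by
    rw [hDy t₀ ht₀]; linarith
  have hcont : ContinuousOn D (Icc 0 t₀) := by
    have c1 : ContinuousOn F1 (Icc 0 t₀) :=
      intervalIntegral.continuousOn_primitive
        ((integrableOn_Icc_iff_integrableOn_Ioc).mpr (hy1int t₀ ht₀))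
    have c2 : ContinuousOn F2 (Icc 0 t₀) :=
      intervalIntegral.continuousOn_primitive
        ((integrableOn_Icc_iff_integrableOn_Ioc).mpr (hy2int t₀ ht₀))
    exact c1.sub c2
  set S : Set ℝ := {s | s ∈ Icc 0 t₀ ∧ D s ≤ 0} with hS
  have hD0 : D 0 = 0 := by simp [hD, hF1, hF2]
  have h0S : (0:ℝ) ∈ S := ⟨left_mem_Icc.mpr ht₀, le_of_eq hD0⟩
  have hSsub : S ⊆ Icc 0 t₀ := fun s hs => hs.1
  have hSclosed : IsClosed S := by
    have : S = Icc 0 t₀ ∩ D ⁻¹' (Iic 0) := rfl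
    rw [this]
    exact hcont.preimage_isClosed_of_isClosed isClosed_Icc isClosed_Iic
  have hScpt : IsCompact S := isCompact_Icc.of_isClosed_subset hSclosed hSsub
  set s₀ : ℝ := sSup S with hs₀
  have hs₀mem : s₀ ∈ S := hScpt.sSup_mem ⟨0, h0S⟩
  obtain ⟨⟨hs₀0, hs₀t₀⟩, hDs₀⟩ := hs₀mem
  -- for s in (s₀, t₀], D s > 0
  have hpos : ∀ s ∈ Set.Ioc s₀ t₀, 0 < D s := by
    intro s hs
    by_contra hle
    push_neg at hle
    have : s ∈ S := ⟨⟨le_trans hs₀0 hs.1.le, hs.2⟩, hle⟩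
    have := le_csSup hScpt.bddAbove this
    exact absurd this (not_le.mpr hs.1)
  -- the integrand
  set g : ℝ → ℝ := fun s => h α₁ (y1 s) - h α₂ (y2 s) with hg
  have hind : ∀ y : ℝ, Set.indicator (Set.Ioi b) (fun _ => (1:ℝ)) y ≤ 1 := by
    intro y
    by_cases hb : y ∈ Set.Ioi b
    · simp [hb]
    · simp [hb]
  have hgle : ∀ s ∈ Set.Ioc s₀ t₀, g s ≤ 0 := by
    intro s hs
    have hDgt := hpos s hs
    have hs0 : (0:ℝ) ≤ s := le_trans hs₀0 hs.1.le
    have hylt : y1 s < y2 s := by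
      have := hDy s hs0
      linarith [hDgt, this.symm ▸ hDgt]
    simp only [hg, hh]
    by_cases hb2 : y2 s ∈ Set.Ioi b
    · have h1 : α₁ * Set.indicator (Set.Ioi b) (fun _ => (1:ℝ)) (y1 s) ≤ α₁ := by
        nlinarith [hind (y1 s), Set.indicator_nonneg (fun y _ => zero_le_one) (a := y1 s)
          (s := Set.Ioi b) (f := fun _ => (1:ℝ))]
      rw [Set.indicator_of_mem hb2]
      nlinarith
    · have hb1 : y1 s ∉ Set.Ioi b := by
        simp only [Set.mem_Ioi, not_lt] at hb2 ⊢
        linarith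
      rw [Set.indicator_of_notMem hb2, Set.indicator_of_notMem hb1]
      ring_nf
      simp
  have hgint_t₀ : IntegrableOn g (Set.Ioc 0 t₀) := (hy1int t₀ ht₀).sub (hy2int t₀ ht₀)
  have hgint1 : IntegrableOn g (Set.Ioc 0 s₀) :=
    hgint_t₀.mono_set (Set.Ioc_subset_Ioc_right hs₀t₀)
  have hgint2 : IntegrableOn g (Set.Ioc s₀ t₀) :=
    hgint_t₀.mono_set (Set.Ioc_subset_Ioc_left hs₀0)
  -- D t = ∫ g on Ioc 0 t
  have hDint : ∀ t : ℝ, 0 ≤ t → D t = ∫ s in Set.Ioc (0:ℝ) t, g s := by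
    intro t ht
    simp only [hD, hF1, hF2, hg]
    rw [MeasureTheory.integral_sub (hy1int t ht) (hy2int t ht)]
  -- splitting
  have hsplit : ∫ s in Set.Ioc (0:ℝ) t₀, g s
      = (∫ s in Set.Ioc (0:ℝ) s₀, g s) + ∫ s in Set.Ioc s₀ t₀, g s := by
    rw [← MeasureTheory.setIntegral_union (Set.Ioc_disjoint_Ioc_of_le le_rfl) measurableSet_Ioc
      hgint1 hgint2, Set.Ioc_union_Ioc_eq_Ioc hs₀0 hs₀t₀]
  have hint2 : (∫ s in Set.Ioc s₀ t₀, g s) ≤ 0 :=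
    MeasureTheory.setIntegral_nonpos_ae measurableSet_Ioc (ae_of_all _ hgle)
  have : D t₀ ≤ 0 := by
    rw [hDint t₀ ht₀, hsplit, ← hDint s₀ hs₀0]
    linarith
  linarith
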